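/- arXiv:1412.4445 — 3 statements merged into one kernel-verified Lean document; each statement's English description precedes it below -/
import Mathlib

section
/- Let h : (0,1)×(0,∞) → ℝ, h(t,s) = t·s, and let ρ be the measure on (0,1)×(0,∞) which is the product of Lebesgue measure on (0,1) and the measure e^{-y} dy on (0,∞). Then the pushforward of ρ under h has density Γ(0,w) = ∫_w^∞ e^{-s}/s ds with respect to Lebesgue measure on (0,∞). -/
open MeasureTheory Real Set ENNReal


theorem my_lintegral_cov {s : Set ℝ} {f f' : ℝ → ℝ} (hs : MeasurableSet s)
    (hf' : ∀ x ∈ s, HasDerivWithinAt f (f' x) s x) (hf : InjOn f s) (g : ℝ → ℝ≥0∞) :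
    ∫⁻ x in f '' s, g x = ∫⁻ x in s, ENNReal.ofReal |f' x| * g (f x) := by
  simpa only [ContinuousLinearMap.det_toSpanSingleton] using
    lintegral_image_eq_lintegral_abs_det_fderiv_mul volume hs
      (fun x hx => (hf' x hx).hasFDerivWithinAt) hf g

-- aux1 : change of variable y ↦ x*y
theorem my_aux1 {s : Set ℝ} {x : ℝ} (hx : x ∈ Ioo (0:ℝ) 1) :
    ∫⁻ y in Ioi (0:ℝ), s.indicator (fun _ => (1:ℝ≥0∞)) (x*y) * ENNReal.ofReal (Real.exp (-y)) =
    ∫⁻ w in Ioi (0:ℝ), s.indicator (fun _ => (1:ℝ≥0∞)) w * ENNReal.ofReal (Real.exp (-(w/x)) / x) := by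
  have hx0 : (0:ℝ) < x := hx.1
  have himg : (fun y => x * y) '' Ioi (0:ℝ) = Ioi 0 := by
    ext w
    simp only [mem_image, mem_Ioi]
    constructor
    · rintro ⟨y, hy, rfl⟩; positivity
    · intro hw; exact ⟨w / x, by positivity, by field_simp⟩
  have key := my_lintegral_cov (s := Ioi (0:ℝ)) (f := fun y => x * y) (f' := fun _ => x) measurableSet_Ioi
    (fun y _ => by simpa using ((hasDerivAt_id y).const_mul x).hasDerivWithinAt)
    (fun a _ b _ h => by
      simpa [hx0.ne'] using h)
    (fun w => s.indicator (fun _ => (1:ℝ≥0∞)) w * ENNReal.ofReal (Real.exp (-(w/x)) / x))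
  rw [himg] at key
  rw [key]
  refine setLIntegral_congr_fun measurableSet_Ioi (fun y hy => ?_)
  have : x * y / x = y := by field_simp
  rw [this, abs_of_pos hx0, mul_comm (ENNReal.ofReal x), mul_assoc,
    ← ENNReal.ofReal_mul (by positivity), div_mul_cancel₀ _ hx0.ne']

theorem my_aux2 {w : ℝ} (hw : 0 < w) :
    ∫⁻ x in Ioo (0:ℝ) 1, ENNReal.ofReal (Real.exp (-(w/x)) / x) =
    ∫⁻ s in Ioi w, ENNReal.ofReal (Real.exp (-s) / s) := by
  have himg : (fun x => w / x) '' Ioo (0:ℝ) 1 = Ioi w := by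
    ext u
    simp only [mem_image, mem_Ioo, mem_Ioi]
    constructor
    · rintro ⟨x, ⟨hx0, hx1⟩, rfl⟩
      rw [lt_div_iff₀ hx0]
      nlinarith
    · intro hu
      have hu0 : 0 < u := hw.trans hu
      exact ⟨w / u, ⟨by positivity, (div_lt_one hu0).2 hu⟩, by field_simp⟩
  have key := my_lintegral_cov (s := Ioo (0:ℝ) 1) (f := fun x => w / x)
    (f' := fun x => -(w / x ^ 2)) measurableSet_Ioo
    (fun x hx => by
      have h := ((hasDerivAt_inv (ne_of_gt hx.1)).const_mul w).hasDerivWithinAt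
        (s := Ioo (0:ℝ) 1)
      have e : -(w / x^2) = w * -((x^2)⁻¹) := by ring
      simp only [div_eq_mul_inv] at e ⊢
      rw [e]
      exact h)
    (fun a ha b hb h => by
      have ha0 : (0:ℝ) < a := ha.1
      have hb0 : (0:ℝ) < b := hb.1
      have h' : w / a = w / b := h
      rw [div_eq_div_iff ha0.ne' hb0.ne'] at h'
      exact mul_left_cancel₀ hw.ne' (by linarith))
    (fun s => ENNReal.ofReal (Real.exp (-s) / s))
  rw [himg] at key
  rw [key]
  refine setLIntegral_congr_fun measurableSet_Ioo (fun x hx => ?_)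
  have hx0 : (0:ℝ) < x := hx.1
  have h1 : |(-(w / x ^ 2))| = w / x ^ 2 := by
    rw [abs_neg, abs_of_pos (by positivity)]
  rw [h1, ← ENNReal.ofReal_mul (by positivity)]
  congr 1
  field_simp


theorem my_integrable {w : ℝ} (hw : 0 < w) :
    IntegrableOn (fun s => Real.exp (-s) / s) (Ioi w) := by
  refine Integrable.mono' ((exp_neg_integrableOn_Ioi w one_pos).const_mul w⁻¹)
    (((measurable_exp.comp measurable_neg).div measurable_id).aestronglyMeasurable) ?_
  rw [ae_restrict_iff' measurableSet_Ioi]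
  refine Filter.Eventually.of_forall fun s hs => ?_
  have hs0 : 0 < s := hw.trans hs
  rw [Real.norm_eq_abs, abs_of_nonneg (by positivity)]
  have : Real.exp (-s) / s ≤ Real.exp (-s) / w :=
    div_le_div_of_nonneg_left (le_of_lt (Real.exp_pos _)) hw (le_of_lt hs)
  calc Real.exp (-s) / s ≤ Real.exp (-s) / w := this
    _ = w⁻¹ * Real.exp (-1 * s) := by rw [neg_one_mul]; ring

theorem my_aux3 {w : ℝ} (hw : 0 < w) :
    ENNReal.ofReal (∫ s in Ioi w, Real.exp (-s) / s) =
    ∫⁻ s in Ioi w, ENNReal.ofReal (Real.exp (-s) / s) := by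
  refine ofReal_integral_eq_lintegral_ofReal (my_integrable hw) ?_
  filter_upwards [ae_restrict_mem measurableSet_Ioi] with s hs
  have hs0 : 0 < s := hw.trans hs
  positivity

/-- The pushforward of `1_{(0,1)}(x)dx × e^{-y}1_{(0,∞)}(y)dy` under `(x,y) ↦ x·y`
has density `Γ(0,w) = ∫_w^∞ e^{-s}/s ds` with respect to Lebesgue measure on `(0,∞)`. -/
theorem map_mul_prod_exp_eq_withDensity_incompleteGamma :
    Measure.map (fun p : ℝ × ℝ => p.1 * p.2)
        ((volume.restrict (Ioo (0 : ℝ) 1)).prod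
          ((volume.restrict (Ioi (0 : ℝ))).withDensity
            (fun y => ENNReal.ofReal (Real.exp (-y))))) =
      (volume.restrict (Ioi (0 : ℝ))).withDensity
        (fun w => ENNReal.ofReal (∫ s in Ioi w, Real.exp (-s) / s)) := by
  have hmul : Measurable fun p : ℝ × ℝ => p.1 * p.2 := measurable_fst.mul measurable_snd
  refine Measure.ext fun s hs => ?_
  rw [Measure.map_apply hmul hs, Measure.prod_apply (hmul hs)]
  -- transform the inner measure values
  have step1 : ∫⁻ x in Ioo (0:ℝ) 1,
      ((volume.restrict (Ioi (0:ℝ))).withDensity (fun y => ENNReal.ofReal (Real.exp (-y))))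
        (Prod.mk x ⁻¹' ((fun p : ℝ × ℝ => p.1 * p.2) ⁻¹' s))
      = ∫⁻ x in Ioo (0:ℝ) 1, ∫⁻ w in Ioi (0:ℝ),
          s.indicator (fun _ => (1:ℝ≥0∞)) w * ENNReal.ofReal (Real.exp (-(w/x)) / x) := by
    refine setLIntegral_congr_fun measurableSet_Ioo (fun x hx => ?_)
    have hB : MeasurableSet (Prod.mk x ⁻¹' ((fun p : ℝ × ℝ => p.1 * p.2) ⁻¹' s)) :=
      measurable_prodMk_left (hmul hs)
    rw [withDensity_apply _ hB, ← lintegral_indicator hB, ← my_aux1 hx]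
    refine setLIntegral_congr_fun measurableSet_Ioi (fun y _ => ?_)
    by_cases hxy : x * y ∈ s <;> simp [Set.indicator_apply, hxy]
  rw [step1]
  -- swap the order of integration
  have hF : Measurable (Function.uncurry fun x w =>
      s.indicator (fun _ => (1:ℝ≥0∞)) w * ENNReal.ofReal (Real.exp (-(w/x)) / x)) := by
    refine Measurable.mul ?_ ?_
    · exact ((measurable_const.indicator hs).comp measurable_snd)
    · exact ENNReal.measurable_ofReal.comp
        ((Real.measurable_exp.comp (measurable_snd.div measurable_fst).neg).div measurable_fst)
  rw [lintegral_lintegral_swap hF.aemeasurable]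
  -- compute the inner integral via aux2
  have step2 : ∫⁻ w in Ioi (0:ℝ), ∫⁻ x in Ioo (0:ℝ) 1,
      s.indicator (fun _ => (1:ℝ≥0∞)) w * ENNReal.ofReal (Real.exp (-(w/x)) / x)
      = ∫⁻ w in Ioi (0:ℝ),
          s.indicator (fun _ => (1:ℝ≥0∞)) w * ENNReal.ofReal (∫ u in Ioi w, Real.exp (-u) / u) := by
    refine setLIntegral_congr_fun measurableSet_Ioi (fun w hw => ?_)
    rw [lintegral_const_mul' _ _ (by by_cases h : w ∈ s <;> simp [Set.indicator_apply, h]),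
      my_aux2 hw, ← my_aux3 hw]
  rw [step2]
  -- identify with the RHS
  rw [withDensity_apply _ hs, ← lintegral_indicator hs]
  refine setLIntegral_congr_fun measurableSet_Ioi (fun w _ => ?_)
  by_cases h : w ∈ s <;> simp [Set.indicator_apply, h]
end

section
/- Let h : (0,∞)×(0,∞) → ℝ, h(t,s) = t·e^{-s}, and let ρ be the product of the measure e^{-t}dt on (0,∞) with Lebesgue measure ds on (0,∞). Then the pushforward of ρ under h has density e^{-u}/u with respect to Lebesgue measure on (0,∞). -/
open MeasureTheory Real Set

lemma aux_map_1d {t : ℝ} (ht : 0 < t) :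
    Measure.map (fun s => t * Real.exp (-s)) (volume.restrict (Ioi (0:ℝ))) =
      (volume.restrict (Ioo (0:ℝ) t)).withDensity (fun u => ENNReal.ofReal u⁻¹) := by
  set g : ℝ → ℝ := fun u => Real.log t - Real.log u with hg
  have hgmeas : Measurable g := measurable_const.sub Real.measurable_log
  have hφmeas : Measurable (fun s : ℝ => t * Real.exp (-s)) :=
    measurable_const.mul (Real.measurable_exp.comp measurable_neg)
  have hderiv : ∀ u ∈ Ioo (0:ℝ) t,
      HasFDerivWithinAt g ((1 : ℝ →L[ℝ] ℝ).smulRight (-u⁻¹)) (Ioo (0:ℝ) t) u := by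
    intro u hu
    exact (((Real.hasDerivAt_log hu.1.ne').const_sub (Real.log t)).hasDerivWithinAt).hasFDerivWithinAt
  have hinj : InjOn g (Ioo (0:ℝ) t) := by
    intro u hu v hv h
    have : Real.log u = Real.log v := by simp only [hg] at h; linarith
    exact Real.log_injOn_pos (mem_Ioi.2 hu.1) (mem_Ioi.2 hv.1) this
  have himg : g '' Ioo (0:ℝ) t = Ioi (0:ℝ) := by
    ext y
    constructor
    · rintro ⟨u, ⟨hu0, hut⟩, rfl⟩
      exact sub_pos.2 (Real.log_lt_log hu0 hut)
    · intro hy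
      refine ⟨t * Real.exp (-y), ⟨by positivity, ?_⟩, ?_⟩
      · exact mul_lt_of_lt_one_right ht (Real.exp_lt_one_iff.2 (neg_neg_iff_pos.2 hy))
      · simp only [hg]
        rw [Real.log_mul ht.ne' (Real.exp_ne_zero _), Real.log_exp]
        ring
  have key := MeasureTheory.map_withDensity_abs_det_fderiv_eq_addHaar volume
    measurableSet_Ioo.nullMeasurableSet hderiv hinj
  rw [himg] at key
  have hdens : (volume.restrict (Ioo (0:ℝ) t)).withDensity
        (fun u => ENNReal.ofReal |((1 : ℝ →L[ℝ] ℝ).smulRight (-u⁻¹)).det|) =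
      (volume.restrict (Ioo (0:ℝ) t)).withDensity (fun u => ENNReal.ofReal u⁻¹) := by
    apply withDensity_congr_ae
    refine (ae_restrict_iff' measurableSet_Ioo).2 (ae_of_all _ fun u hu => ?_)
    simp only [ContinuousLinearMap.det_smulRight, ContinuousLinearMap.one_apply, one_mul, abs_neg]
    rw [abs_of_nonneg (inv_nonneg.2 hu.1.le)]
  rw [hdens] at key
  calc Measure.map (fun s => t * Real.exp (-s)) (volume.restrict (Ioi (0:ℝ)))
      = Measure.map (fun s => t * Real.exp (-s)) (Measure.map g
          ((volume.restrict (Ioo (0:ℝ) t)).withDensity (fun u => ENNReal.ofReal u⁻¹))) := by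
        rw [key]
    _ = Measure.map ((fun s => t * Real.exp (-s)) ∘ g)
          ((volume.restrict (Ioo (0:ℝ) t)).withDensity (fun u => ENNReal.ofReal u⁻¹)) := by
        rw [Measure.map_map hφmeas hgmeas]
    _ = Measure.map id
          ((volume.restrict (Ioo (0:ℝ) t)).withDensity (fun u => ENNReal.ofReal u⁻¹)) := by
        apply Measure.map_congr
        have h0 : (fun u => t * Real.exp (-(g u))) =ᵐ[volume.restrict (Ioo (0:ℝ) t)] id := by
          refine (ae_restrict_iff' measurableSet_Ioo).2 (ae_of_all _ fun u hu => ?_)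
          simp only [hg, id]
          rw [neg_sub, Real.exp_sub, Real.exp_log hu.1, Real.exp_log ht]
          field_simp
        exact h0.filter_mono (withDensity_absolutelyContinuous _ _).ae_le
    _ = (volume.restrict (Ioo (0:ℝ) t)).withDensity (fun u => ENNReal.ofReal u⁻¹) :=
        Measure.map_id

lemma aux_lint_exp (u : ℝ) :
    ∫⁻ t in Ioi u, ENNReal.ofReal (Real.exp (-t)) = ENNReal.ofReal (Real.exp (-u)) := by
  have hint : IntegrableOn (fun t : ℝ => Real.exp (-t)) (Ioi u) := by
    simpa using exp_neg_integrableOn_Ioi u one_pos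
  rw [← ofReal_integral_eq_lintegral_ofReal hint
    (Filter.Eventually.of_forall fun x => (Real.exp_pos _).le), integral_exp_neg_Ioi]

/-- The pushforward of `e^{-t}1_{(0,∞)}(t)dt × 1_{(0,∞)}(s)ds` under `(t,s) ↦ t·e^{-s}`
has density `u ↦ e^{-u}/u` with respect to Lebesgue measure on `(0,∞)`. -/
theorem map_mul_exp_neg_prod_eq_withDensity :
    Measure.map (fun p : ℝ × ℝ => p.1 * Real.exp (-p.2))
        (((volume.restrict (Ioi (0 : ℝ))).withDensity
            (fun t => ENNReal.ofReal (Real.exp (-t)))).prod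
          (volume.restrict (Ioi (0 : ℝ)))) =
      (volume.restrict (Ioi (0 : ℝ))).withDensity
        (fun u => ENNReal.ofReal (Real.exp (-u) / u)) := by
  have hh : Measurable (fun p : ℝ × ℝ => p.1 * Real.exp (-p.2)) :=
    measurable_fst.mul (Real.measurable_exp.comp measurable_snd.neg)
  refine Measure.ext fun A hA => ?_
  set S₀ : Set (ℝ × ℝ) :=
    (Prod.snd ⁻¹' Ioi (0:ℝ)) ∩ {q : ℝ × ℝ | q.2 < q.1} ∩ (Prod.snd ⁻¹' A) with hS₀def
  have hS₀ : MeasurableSet S₀ :=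
    ((measurable_snd measurableSet_Ioi).inter
      (measurableSet_lt measurable_snd measurable_fst)).inter (measurable_snd hA)
  have hS₀mem : ∀ t u : ℝ, (t, u) ∈ S₀ ↔ 0 < u ∧ u < t ∧ u ∈ A := by
    intro t u
    simp [hS₀def, and_assoc]
  set f0 : ℝ × ℝ → ENNReal :=
    fun q => ENNReal.ofReal (Real.exp (-q.1)) * ENNReal.ofReal q.2⁻¹ with hf0def
  have hf0 : Measurable f0 :=
    ((Real.measurable_exp.comp measurable_fst.neg).ennreal_ofReal).mul
      (measurable_snd.inv.ennreal_ofReal)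
  set F : ℝ → ℝ → ENNReal := fun t u => S₀.indicator f0 (t, u) with hFdef
  rw [Measure.map_apply hh hA, Measure.prod_apply (hh hA),
    lintegral_withDensity_eq_lintegral_mul (volume.restrict (Ioi (0:ℝ)))
      (f := fun t => ENNReal.ofReal (Real.exp (-t)))
      (Measurable.ennreal_ofReal (by fun_prop))
      (measurable_measure_prodMk_left (hh hA))]
  simp only [Pi.mul_apply]
  have step1 : ∫⁻ t, (fun t => ENNReal.ofReal (Real.exp (-t))) t *
        (fun t => (volume.restrict (Ioi (0:ℝ))) (Prod.mk t ⁻¹' ((fun p : ℝ × ℝ => p.1 * Real.exp (-p.2)) ⁻¹' A))) t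
        ∂(volume.restrict (Ioi (0:ℝ)))
      = ∫⁻ t, ∫⁻ u, F t u := by
    rw [← lintegral_indicator measurableSet_Ioi _]
    refine lintegral_congr fun t => ?_
    by_cases ht : t ∈ Ioi (0:ℝ)
    · rw [indicator_of_mem ht]
      beta_reduce
      have hpre : Prod.mk t ⁻¹' ((fun p : ℝ × ℝ => p.1 * Real.exp (-p.2)) ⁻¹' A)
          = (fun s => t * Real.exp (-s)) ⁻¹' A := rfl
      rw [hpre, ← Measure.map_apply (f := fun s => t * Real.exp (-s)) (by fun_prop) hA,
        aux_map_1d ht, withDensity_apply _ hA, Measure.restrict_restrict hA,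
        ← lintegral_const_mul _ measurable_inv.ennreal_ofReal,
        ← lintegral_indicator (hA.inter measurableSet_Ioo) _]
      refine lintegral_congr fun u => ?_
      by_cases hu : u ∈ A ∩ Ioo 0 t
      · rw [indicator_of_mem hu, hFdef]
        simp only
        rw [indicator_of_mem ((hS₀mem t u).2 ⟨hu.2.1, hu.2.2, hu.1⟩), hf0def]
      · rw [indicator_of_notMem hu, hFdef]
        simp only
        rw [indicator_of_notMem]
        intro hmem
        exact hu ⟨((hS₀mem t u).1 hmem).2.2, ((hS₀mem t u).1 hmem).1, ((hS₀mem t u).1 hmem).2.1⟩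
    · rw [indicator_of_notMem ht]
      symm
      have : ∀ u, F t u = 0 := by
        intro u
        simp only [hFdef]
        rw [indicator_of_notMem]
        intro hmem
        rcases (hS₀mem t u).1 hmem with ⟨h1, h2, _⟩
        exact ht (mem_Ioi.2 (h1.trans h2))
      simp [this]
  rw [step1]
  have hswap : ∫⁻ t, ∫⁻ u, F t u = ∫⁻ u, ∫⁻ t, F t u := by
    have : Measurable (Function.uncurry F) := by
      have : Function.uncurry F = S₀.indicator f0 := by
        funext p
        rw [hFdef, Function.uncurry]
      rw [this]
      exact hf0.indicator hS₀
    exact lintegral_lintegral_swap this.aemeasurable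
  rw [hswap, withDensity_apply _ hA, Measure.restrict_restrict hA,
    ← lintegral_indicator (hA.inter measurableSet_Ioi) _]
  refine lintegral_congr fun u => ?_
  by_cases hu : u ∈ A ∩ Ioi (0:ℝ)
  · have hFu : ∀ t, F t u = (Ioi u).indicator
        (fun t => ENNReal.ofReal (Real.exp (-t)) * ENNReal.ofReal u⁻¹) t := by
      intro t
      simp only [hFdef]
      by_cases ht : t ∈ Ioi u
      · rw [indicator_of_mem ((hS₀mem t u).2 ⟨hu.2, mem_Ioi.1 ht, hu.1⟩), indicator_of_mem ht,
          hf0def]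
      · rw [indicator_of_notMem ht, indicator_of_notMem]
        intro hmem
        exact ht (mem_Ioi.2 ((hS₀mem t u).1 hmem).2.1)
    calc ∫⁻ t, F t u
        = ∫⁻ t in Ioi u, ENNReal.ofReal (Real.exp (-t)) * ENNReal.ofReal u⁻¹ := by
          simp_rw [hFu]
          rw [lintegral_indicator measurableSet_Ioi _]
      _ = (∫⁻ t in Ioi u, ENNReal.ofReal (Real.exp (-t))) * ENNReal.ofReal u⁻¹ :=
          lintegral_mul_const _ ((Real.measurable_exp.comp measurable_neg).ennreal_ofReal)
      _ = ENNReal.ofReal (Real.exp (-u)) * ENNReal.ofReal u⁻¹ := by rw [aux_lint_exp]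
      _ = (A ∩ Ioi 0).indicator (fun u => ENNReal.ofReal (Real.exp (-u) / u)) u := by
          rw [indicator_of_mem hu, div_eq_mul_inv, ENNReal.ofReal_mul (Real.exp_pos _).le]
  · have hFu : ∀ t, F t u = 0 := by
      intro t
      simp only [hFdef]
      rw [indicator_of_notMem]
      intro hmem
      rcases (hS₀mem t u).1 hmem with ⟨h1, _, h3⟩
      exact hu ⟨h3, mem_Ioi.2 h1⟩
    rw [indicator_of_notMem hu]
    simp [hFu]
end

section
/- For every t ∈ ℝ, ∫_0^∞ (e^{itw} − 1)·(e^{-w}/w) dw = −log(1 − it), where log is the principal branch of the complex logarithm. Equivalently, exp of the left side equals 1/(1−it), which is the characteristic function of the standard exponential distribution. -/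
open MeasureTheory Real Set Filter Metric

/-- `‖e^{iθ} - 1‖ ≤ |θ|`. -/
lemma norm_cexp_I_sub_one_le (θ : ℝ) : ‖Complex.exp (Complex.I * θ) - 1‖ ≤ |θ| := by
  have h : Complex.exp (Complex.I * θ) - 1 =
      Complex.I * ∫ s in (0:ℝ)..θ, Complex.exp (Complex.I * s) := by
    rw [integral_exp_mul_complex Complex.I_ne_zero, ← mul_div_assoc,
      mul_div_cancel_left₀ _ Complex.I_ne_zero]
    simp
  rw [h, norm_mul, Complex.norm_I, one_mul]
  have := intervalIntegral.norm_integral_le_of_norm_le_const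
    (f := fun s : ℝ => Complex.exp (Complex.I * s)) (a := 0) (b := θ) (C := 1) ?_
  · simpa using this
  · intro x hx
    simp [Complex.norm_exp]

/-- `∫_0^∞ e^{cw} dw = -1/c` for `Re c < 0`. -/
lemma integral_cexp_Ioi {c : ℂ} (hc : c.re < 0) :
    ∫ w in Ioi (0:ℝ), Complex.exp (c * w) = -1 / c := by
  have hc0 : c ≠ 0 := fun h => by simp [h] at hc
  have hderiv : ∀ x ∈ Ici (0:ℝ),
      HasDerivAt (fun w : ℝ => Complex.exp (c * w) / c) (Complex.exp (c * x)) x := by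
    intro x _
    have h1 : HasDerivAt (fun w : ℝ => c * (w : ℂ)) c x := by
      simpa using (Complex.ofRealCLM.hasDerivAt (x := x)).const_mul c
    have := (h1.cexp).div_const c
    simpa [mul_div_assoc, mul_div_cancel_left₀ _ hc0, mul_comm] using this
  have hint : IntegrableOn (fun w : ℝ => Complex.exp (c * w)) (Ioi (0:ℝ)) := by
    apply (exp_neg_integrableOn_Ioi 0 (b := -c.re) (by linarith)).mono'
    · exact (Complex.continuous_exp.comp (by continuity)).aestronglyMeasurable
    · filter_upwards with w
      have hre : (c * (w:ℂ)).re = c.re * w := by simp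
      rw [Complex.norm_exp, hre]
      simp
  have htend : Tendsto (fun w : ℝ => Complex.exp (c * w) / c) atTop (nhds 0) := by
    rw [tendsto_zero_iff_norm_tendsto_zero]
    have heq : (fun w : ℝ => ‖Complex.exp (c * w) / c‖) =
        fun w : ℝ => Real.exp (c.re * w) / ‖c‖ := by
      ext w; simp [Complex.norm_exp]
    rw [heq]
    have h2 : Tendsto (fun w : ℝ => c.re * w) atTop atBot :=
      Tendsto.const_mul_atTop_of_neg hc tendsto_id
    simpa using (Real.tendsto_exp_atBot.comp h2).div_const ‖c‖
  have := integral_Ioi_of_hasDerivAt_of_tendsto' hderiv hint htend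
  simpa [neg_div] using this

noncomputable def expF (t : ℝ) : ℂ :=
  ∫ w in Ioi (0 : ℝ),
    (Complex.exp (Complex.I * t * w) - 1) * (Real.exp (-w) / w)

lemma expF_meas (t : ℝ) : AEStronglyMeasurable
    (fun w : ℝ => (Complex.exp (Complex.I * t * w) - 1) * ((Real.exp (-w) / w : ℝ) : ℂ))
    (volume.restrict (Ioi (0:ℝ))) := by
  apply Measurable.aestronglyMeasurable
  fun_prop

lemma expF_int (t : ℝ) : IntegrableOn
    (fun w : ℝ => (Complex.exp (Complex.I * t * w) - 1) * ((Real.exp (-w) / w : ℝ) : ℂ))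
    (Ioi (0:ℝ)) := by
  apply Integrable.mono' (g := fun w : ℝ => |t| * Real.exp (-(1:ℝ) * w))
    ((exp_neg_integrableOn_Ioi 0 one_pos).const_mul |t|) (expF_meas t)
  filter_upwards [ae_restrict_mem measurableSet_Ioi] with w hw
  rw [mem_Ioi] at hw
  rw [norm_mul]
  have h1 : ‖Complex.exp (Complex.I * t * w) - 1‖ ≤ |t * w| := by
    have := norm_cexp_I_sub_one_le (t * w)
    simpa [mul_assoc, Complex.ofReal_mul] using this
  have h2 : ‖((Real.exp (-w) / w : ℝ) : ℂ)‖ = Real.exp (-w) / w := by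
    rw [Complex.norm_real, Real.norm_eq_abs, abs_of_nonneg (by positivity)]
  rw [h2]
  calc ‖Complex.exp (Complex.I * t * w) - 1‖ * (Real.exp (-w) / w)
      ≤ |t * w| * (Real.exp (-w) / w) := by
        apply mul_le_mul_of_nonneg_right h1 (by positivity)
    _ = |t| * Real.exp (-(1:ℝ) * w) := by
        rw [abs_mul, abs_of_pos hw, neg_one_mul]
        field_simp

lemma expF_hasDerivAt (t : ℝ) :
    HasDerivAt expF (Complex.I / (1 - Complex.I * t)) t := by
  have key := hasDerivAt_integral_of_dominated_loc_of_deriv_le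
    (μ := volume.restrict (Ioi (0:ℝ)))
    (F := fun (x : ℝ) (w : ℝ) =>
      (Complex.exp (Complex.I * x * w) - 1) * ((Real.exp (-w) / w : ℝ) : ℂ))
    (F' := fun (x : ℝ) (w : ℝ) =>
      Complex.I * Complex.exp (Complex.I * x * w) * (Real.exp (-w) : ℝ))
    (x₀ := t) (s := ball t 1) (bound := fun w => Real.exp (-w))
    (ball_mem_nhds t one_pos)
    (Eventually.of_forall fun x => expF_meas x)
    (expF_int t)
    (by apply Measurable.aestronglyMeasurable; fun_prop)
    ?_ ?_ ?_
  · have h2 : (∫ w in Ioi (0:ℝ),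
        Complex.I * Complex.exp (Complex.I * t * w) * (Real.exp (-w) : ℝ)) =
        Complex.I / (1 - Complex.I * t) := by
      have heq : ∀ w ∈ Ioi (0:ℝ),
          Complex.I * Complex.exp (Complex.I * t * w) * ((Real.exp (-w) : ℝ) : ℂ) =
          Complex.I * Complex.exp ((Complex.I * t - 1) * w) := by
        intro w _
        rw [Complex.ofReal_exp, mul_assoc, ← Complex.exp_add]
        push_cast
        ring_nf
      rw [setIntegral_congr_fun measurableSet_Ioi heq, integral_const_mul,
        integral_cexp_Ioi (c := Complex.I * t - 1) (by simp)]
      rw [show Complex.I * (t:ℂ) - 1 = -(1 - Complex.I * t) by ring, div_neg, neg_div,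
        neg_neg, mul_one_div]
    have h3 : expF = fun n : ℝ => ∫ w in Ioi (0:ℝ),
        (Complex.exp (Complex.I * n * w) - 1) * ((Real.exp (-w) / w : ℝ) : ℂ) := by
      funext n
      unfold expF
      simp_rw [Complex.ofReal_div]
    rw [h3, ← h2]
    exact key.2
  · filter_upwards with w
    intro x _
    rw [norm_mul, norm_mul]
    simp [Complex.norm_exp]
  · exact (exp_neg_integrableOn_Ioi 0 one_pos).congr_fun (fun x _ => by simp) measurableSet_Ioi
  · filter_upwards [ae_restrict_mem measurableSet_Ioi] with w hw
    rw [mem_Ioi] at hw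
    intro x _
    have h1 : HasDerivAt (fun x : ℝ => Complex.I * x * w) (Complex.I * w) x := by
      have := (Complex.ofRealCLM.hasDerivAt (x := x)).const_mul (Complex.I * (w : ℂ))
      simpa [mul_comm, mul_left_comm, mul_assoc] using this
    have h2 := (h1.cexp.sub_const 1).mul_const ((Real.exp (-w) / w : ℝ) : ℂ)
    refine h2.congr_deriv ?_
    have hw0 : (w : ℂ) ≠ 0 := by exact_mod_cast ne_of_gt hw
    push_cast
    field_simp

/-- For every real `t`, `∫_0^∞ (e^{itw} - 1) e^{-w}/w dw = -log(1 - it)`,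
with the principal branch of the complex logarithm. -/
theorem integral_exponential_log_cf (t : ℝ) :
    (∫ w in Ioi (0 : ℝ),
        (Complex.exp (Complex.I * t * w) - 1) * (Real.exp (-w) / w)) =
      -Complex.log (1 - Complex.I * t) := by
  have hslit : ∀ s : ℝ, (1 - Complex.I * s) ∈ Complex.slitPlane := by
    intro s
    exact Complex.mem_slitPlane_iff.2 (Or.inl (by simp))
  have hlog : ∀ s : ℝ, HasDerivAt (fun s : ℝ => Complex.log (1 - Complex.I * s))
      (-Complex.I / (1 - Complex.I * s)) s := by
    intro s
    have h1 : HasDerivAt (fun s : ℝ => 1 - Complex.I * (s:ℂ)) (-Complex.I) s := by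
      have := (Complex.ofRealCLM.hasDerivAt (x := s)).const_mul Complex.I
      simpa using (this.const_sub 1)
    exact h1.clog_real (hslit s)
  set H : ℝ → ℂ := fun s => expF s + Complex.log (1 - Complex.I * s) with hH
  have hH' : ∀ s, HasDerivAt H 0 s := by
    intro s
    have hne : (1 : ℂ) - Complex.I * s ≠ 0 := Complex.slitPlane_ne_zero (hslit s)
    have h := (expF_hasDerivAt s).add (hlog s)
    have h0 : Complex.I / (1 - Complex.I * s) + -Complex.I / (1 - Complex.I * s) = 0 := by
      field_simp
      simp
    rwa [h0] at h
  have hconst : H t = H 0 := by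
    exact is_const_of_deriv_eq_zero (fun s => (hH' s).differentiableAt)
      (fun s => (hH' s).deriv) t 0
  have hF0 : expF 0 = 0 := by
    unfold expF
    simp
  have hH0 : H 0 = 0 := by
    simp [hH, hF0]
  have hfin : expF t = -Complex.log (1 - Complex.I * t) := by
    have h := hconst.trans hH0
    rw [hH] at h
    simp only at h
    linear_combination h
  simpa [expF] using hfin
end
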